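/- Let 𝒜 ∈ Sp(2d,ℝ) and assume E_𝒜 is invertible. Then ℰ_𝒜 is invertible and det(ℰ_𝒜) = (−1)^d det(E_𝒜). -/
import Mathlib


open Matrix
open Polynomial

set_option maxRecDepth 10000

/-- Index type for `2d × 2d` matrices, viewed as two `d`-blocks. -/
abbrev I2 (d : ℕ) := Fin d ⊕ Fin d

/-- Index type for `4d × 4d` matrices, viewed as four `d`-blocks. -/
abbrev I4 (d : ℕ) := I2 d ⊕ I2 d

/-- The standard symplectic matrix `J = [[0, I], [-I, 0]]`. -/
def symplJ (α : Type*) [Fintype α] [DecidableEq α] : Matrix (α ⊕ α) (α ⊕ α) ℝ :=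
  fromBlocks 0 1 (-1) 0

/-- `A` is symplectic if `Aᵀ J A = J`. -/
def IsSymplectic {α : Type*} [Fintype α] [DecidableEq α]
    (A : Matrix (α ⊕ α) (α ⊕ α) ℝ) : Prop :=
  Aᵀ * symplJ α * A = symplJ α

/-- Embedding of the "odd" block columns (blocks 1 and 3) of a `4d×4d` matrix. -/
def colOdd (d : ℕ) : I2 d → I4 d :=
  Sum.elim (fun i => Sum.inl (Sum.inl i)) (fun i => Sum.inr (Sum.inl i))

/-- Embedding of the "even" block columns (blocks 2 and 4) of a `4d×4d` matrix. -/
def colEven (d : ℕ) : I2 d → I4 d :=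
  Sum.elim (fun i => Sum.inl (Sum.inr i)) (fun i => Sum.inr (Sum.inr i))

/-- `E_𝒜 = [[A₁₁, A₁₃], [A₂₁, A₂₃]]`. -/
def subE {d : ℕ} (A : Matrix (I4 d) (I4 d) ℝ) : Matrix (I2 d) (I2 d) ℝ :=
  A.submatrix Sum.inl (colOdd d)

/-- `ℰ_𝒜 = [[A₁₂, A₁₄], [A₂₂, A₂₄]]`. -/
def subEE {d : ℕ} (A : Matrix (I4 d) (I4 d) ℝ) : Matrix (I2 d) (I2 d) ℝ :=
  A.submatrix Sum.inl (colEven d)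

/-- `F_𝒜 = [[A₃₁, A₃₃], [A₄₁, A₄₃]]`. -/
def subF {d : ℕ} (A : Matrix (I4 d) (I4 d) ℝ) : Matrix (I2 d) (I2 d) ℝ :=
  A.submatrix Sum.inr (colOdd d)

/-- `ℱ_𝒜 = [[A₃₂, A₃₄], [A₄₂, A₄₄]]`. -/
def subFF {d : ℕ} (A : Matrix (I4 d) (I4 d) ℝ) : Matrix (I2 d) (I2 d) ℝ :=
  A.submatrix Sum.inr (colEven d)

/-- Row/column embedding of the `i`-th `d`-block (i = 1,2,3,4). -/
def r1 (d : ℕ) : Fin d → I4 d := fun i => Sum.inl (Sum.inl i)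
def r2 (d : ℕ) : Fin d → I4 d := fun i => Sum.inl (Sum.inr i)
def r3 (d : ℕ) : Fin d → I4 d := fun i => Sum.inr (Sum.inl i)
def r4 (d : ℕ) : Fin d → I4 d := fun i => Sum.inr (Sum.inr i)

/-- The `d×d` block `A_{ij}` of a `4d×4d` matrix, given the row and column embeddings. -/
def blk {d : ℕ} (A : Matrix (I4 d) (I4 d) ℝ) (ri cj : Fin d → I4 d) :
    Matrix (Fin d) (Fin d) ℝ :=
  A.submatrix ri cj

/-- The symmetric matrix `M_𝒜` associated with a symplectic `4d×4d` matrix `𝒜`. -/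
def Mmat {d : ℕ} (A : Matrix (I4 d) (I4 d) ℝ) : Matrix (I2 d) (I2 d) ℝ :=
  fromBlocks
    ((blk A (r1 d) (r1 d))ᵀ * blk A (r3 d) (r1 d) + (blk A (r2 d) (r1 d))ᵀ * blk A (r4 d) (r1 d))
    ((blk A (r3 d) (r1 d))ᵀ * blk A (r1 d) (r3 d) + (blk A (r4 d) (r1 d))ᵀ * blk A (r2 d) (r3 d))
    ((blk A (r1 d) (r3 d))ᵀ * blk A (r3 d) (r1 d) + (blk A (r2 d) (r3 d))ᵀ * blk A (r4 d) (r1 d))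
    ((blk A (r1 d) (r3 d))ᵀ * blk A (r3 d) (r3 d) + (blk A (r2 d) (r3 d))ᵀ * blk A (r4 d) (r3 d))

/-- `𝒟_E = [[E⁻¹, 0], [0, Eᵀ]]`. -/
noncomputable def Dmat {α : Type*} [Fintype α] [DecidableEq α] (E : Matrix α α ℝ) :
    Matrix (α ⊕ α) (α ⊕ α) ℝ :=
  fromBlocks E⁻¹ 0 0 Eᵀ

/-- `V_C = [[I, 0], [C, I]]`. -/
def Vmat {α : Type*} [Fintype α] [DecidableEq α] (C : Matrix α α ℝ) :
    Matrix (α ⊕ α) (α ⊕ α) ℝ :=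
  fromBlocks 1 0 C 1

/-- `L = [[0, I], [I, 0]]` (`2d × 2d`). -/
def Lmat (d : ℕ) : Matrix (I2 d) (I2 d) ℝ :=
  fromBlocks 0 1 1 0

/-- `Lift(G)`: the `4d×4d` matrix with block rows `[I,0,0,0]`, `[0,G₁₁,0,G₁₂]`,
`[0,0,I,0]`, `[0,G₂₁,0,G₂₂]`. -/
def Lift {d : ℕ} (G : Matrix (I2 d) (I2 d) ℝ) : Matrix (I4 d) (I4 d) ℝ :=
  fromBlocks
    (fromBlocks 1 0 0 (G.submatrix Sum.inl Sum.inl))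
    (fromBlocks 0 0 0 (G.submatrix Sum.inl Sum.inr))
    (fromBlocks 0 0 0 (G.submatrix Sum.inr Sum.inl))
    (fromBlocks 1 0 0 (G.submatrix Sum.inr Sum.inr))
namespace SymplAux

variable {l : Type*} [Fintype l] [DecidableEq l]

lemma blocks_eq {n o p q : Type*} {A A' : Matrix n p ℝ} {B B' : Matrix n q ℝ}
    {C C' : Matrix o p ℝ} {D D' : Matrix o q ℝ}
    (h : fromBlocks A B C D = fromBlocks A' B' C' D') :
    A = A' ∧ B = B' ∧ C = C' ∧ D = D' := by
  refine ⟨?_, ?_, ?_, ?_⟩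
  · have := congrArg Matrix.toBlocks₁₁ h; simpa [toBlocks_fromBlocks₁₁] using this
  · have := congrArg Matrix.toBlocks₁₂ h; simpa [toBlocks_fromBlocks₁₂] using this
  · have := congrArg Matrix.toBlocks₂₁ h; simpa [toBlocks_fromBlocks₂₁] using this
  · have := congrArg Matrix.toBlocks₂₂ h; simpa [toBlocks_fromBlocks₂₂] using this

lemma dp_nonneg {n : Type*} [Fintype n] (v : n → ℝ) : 0 ≤ v ⬝ᵥ v :=
  Finset.sum_nonneg fun i _ => mul_self_nonneg (v i)

lemma J_sq : symplJ l * symplJ l = -1 := by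
  have h1 : symplJ l * symplJ l = fromBlocks (-1) 0 0 (-1) := by
    rw [symplJ, fromBlocks_multiply]
    simp
  have h2 : (-1 : Matrix (l ⊕ l) (l ⊕ l) ℝ) = fromBlocks (-1) 0 0 (-1) := by
    rw [← fromBlocks_one, Matrix.fromBlocks_neg, neg_zero]
  rw [h1, h2]

lemma rel_left {A B C D : Matrix l l ℝ}
    (h : (fromBlocks A B C D)ᵀ * symplJ l * fromBlocks A B C D = symplJ l) :
    Aᵀ * C = Cᵀ * A ∧ Aᵀ * D - Cᵀ * B = 1 := by
  rw [fromBlocks_transpose, symplJ, fromBlocks_multiply, fromBlocks_multiply] at h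
  simp only [Matrix.mul_zero, Matrix.mul_one, Matrix.mul_neg, Matrix.neg_mul,
    zero_add, add_zero] at h
  obtain ⟨h11, h12, -, -⟩ := blocks_eq h
  constructor
  · rw [neg_add_eq_sub, sub_eq_zero] at h11; exact h11
  · rwa [neg_add_eq_sub] at h12

lemma flip {S : Matrix (l ⊕ l) (l ⊕ l) ℝ}
    (h : Sᵀ * symplJ l * S = symplJ l) :
    S * symplJ l * Sᵀ = symplJ l := by
  have hleft : (-(symplJ l) * Sᵀ * symplJ l) * S = 1 := by
    calc (-(symplJ l) * Sᵀ * symplJ l) * S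
        = -(symplJ l) * (Sᵀ * symplJ l * S) := by
          simp only [Matrix.neg_mul, mul_assoc]
      _ = -(symplJ l * symplJ l) := by rw [h, Matrix.neg_mul]
      _ = 1 := by rw [J_sq, neg_neg]
  have hright : S * (-(symplJ l) * Sᵀ * symplJ l) = 1 := mul_eq_one_comm.mp hleft
  have key : S * (symplJ l * Sᵀ * symplJ l) = -1 := by
    have h' : -(S * (symplJ l * Sᵀ * symplJ l)) = 1 := by
      calc -(S * (symplJ l * Sᵀ * symplJ l))
          = S * (-(symplJ l) * Sᵀ * symplJ l) := by
            rw [Matrix.neg_mul, Matrix.neg_mul, Matrix.mul_neg]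
        _ = 1 := hright
    exact neg_eq_iff_eq_neg.mp h'
  calc S * symplJ l * Sᵀ
      = (S * symplJ l * Sᵀ) * (symplJ l * -(symplJ l)) := by
        rw [Matrix.mul_neg, J_sq, neg_neg, mul_one]
    _ = (S * (symplJ l * Sᵀ * symplJ l)) * -(symplJ l) := by
        simp only [mul_assoc]
    _ = (-1 : Matrix (l ⊕ l) (l ⊕ l) ℝ) * -(symplJ l) := by rw [key]
    _ = symplJ l := by rw [Matrix.neg_mul, Matrix.mul_neg, Matrix.one_mul, neg_neg]

lemma rel_right {A B C D : Matrix l l ℝ}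
    (h : (fromBlocks A B C D)ᵀ * symplJ l * fromBlocks A B C D = symplJ l) :
    A * Bᵀ = B * Aᵀ ∧ A * Dᵀ - B * Cᵀ = 1 := by
  have h2 := flip h
  rw [fromBlocks_transpose, symplJ, fromBlocks_multiply, fromBlocks_multiply] at h2
  simp only [Matrix.mul_zero, Matrix.mul_one, Matrix.mul_neg, Matrix.neg_mul,
    zero_add, add_zero] at h2
  obtain ⟨h11, h12, -, -⟩ := blocks_eq h2
  constructor
  · rw [neg_add_eq_sub, sub_eq_zero] at h11; exact h11
  · rwa [neg_add_eq_sub] at h12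


lemma complex_det_ne {n : Type*} [Fintype n] [DecidableEq n] (A B : Matrix n n ℝ)
    (hAB : A * Bᵀ = B * Aᵀ) (hM : (A * Aᵀ + B * Bᵀ).det ≠ 0) :
    (A.map Complex.ofReal + Complex.I • B.map Complex.ofReal).det ≠ 0 := by
  have hmap : ∀ X Y : Matrix n n ℝ, (X * Y).map Complex.ofReal
      = X.map Complex.ofReal * Y.map Complex.ofReal := fun X Y =>
    Matrix.map_mul (f := Complex.ofRealHom)
  have hBA : (B.map Complex.ofReal) * (A.map Complex.ofReal)ᵀ
      = (A.map Complex.ofReal) * (B.map Complex.ofReal)ᵀ := by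
    rw [← Matrix.transpose_map, ← Matrix.transpose_map, ← hmap, ← hmap, hAB]
  have hkey : (A.map Complex.ofReal + Complex.I • B.map Complex.ofReal) *
      ((A.map Complex.ofReal)ᵀ - Complex.I • (B.map Complex.ofReal)ᵀ)
      = (A * Aᵀ + B * Bᵀ).map Complex.ofReal := by
    rw [Matrix.add_mul, Matrix.mul_sub, Matrix.mul_sub]
    simp only [Matrix.smul_mul, Matrix.mul_smul, smul_smul, Complex.I_mul_I, neg_one_smul]
    rw [hBA, Matrix.map_add Complex.ofReal (by intro a b; simp), hmap, hmap,
      Matrix.transpose_map, Matrix.transpose_map]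
    abel
  intro h0
  have hd := congrArg Matrix.det hkey
  rw [Matrix.det_mul, h0, zero_mul] at hd
  apply hM
  have h2 : (Complex.ofRealHom : ℝ →+* ℂ) ((A * Aᵀ + B * Bᵀ).det) = 0 := by
    rw [RingHom.map_det, RingHom.mapMatrix_apply]
    exact hd.symm
  simpa [Complex.ofRealHom_eq_coe, Complex.ofReal_eq_zero] using h2

lemma exists_real_det_ne {n : Type*} [Fintype n] [DecidableEq n] (A B : Matrix n n ℝ)
    (hc : (A.map Complex.ofReal + Complex.I • B.map Complex.ofReal).det ≠ 0) :
    ∃ z : ℝ, (A + z • B).det ≠ 0 := by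
  have hentry : ∀ i j, (A.map Polynomial.C +
      (Polynomial.X : Polynomial ℝ) • B.map Polynomial.C) i j
      = Polynomial.C (A i j) + Polynomial.X * Polynomial.C (B i j) := by
    intro i j
    simp [Matrix.add_apply, Matrix.map_apply, Matrix.smul_apply, smul_eq_mul]
  have hmapz : ∀ z : ℝ, (A.map Polynomial.C +
      (Polynomial.X : Polynomial ℝ) • B.map Polynomial.C).map (Polynomial.evalRingHom z)
      = A + z • B := by
    intro z
    ext i j
    rw [Matrix.map_apply, hentry]
    simp [Matrix.add_apply, Matrix.smul_apply, smul_eq_mul]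
    ring
  have hmapI : (A.map Polynomial.C +
      (Polynomial.X : Polynomial ℝ) • B.map Polynomial.C).map
        ((Polynomial.aeval Complex.I : Polynomial ℝ →ₐ[ℝ] ℂ) : Polynomial ℝ →+* ℂ)
      = A.map Complex.ofReal + Complex.I • B.map Complex.ofReal := by
    ext i j
    rw [Matrix.map_apply, hentry]
    simp [Matrix.add_apply, Matrix.smul_apply, Matrix.map_apply]
    ring
  have hPne : (A.map Polynomial.C +
      (Polynomial.X : Polynomial ℝ) • B.map Polynomial.C).det ≠ 0 := by
    intro h0
    apply hc
    have h1 := RingHom.map_det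
      ((Polynomial.aeval Complex.I : Polynomial ℝ →ₐ[ℝ] ℂ) : Polynomial ℝ →+* ℂ)
      (A.map Polynomial.C + (Polynomial.X : Polynomial ℝ) • B.map Polynomial.C)
    rw [RingHom.mapMatrix_apply, hmapI, h0, map_zero] at h1
    exact h1.symm
  by_contra hcon
  push_neg at hcon
  apply hPne
  apply Polynomial.funext
  intro r
  have h1 := RingHom.map_det (Polynomial.evalRingHom r)
    (A.map Polynomial.C + (Polynomial.X : Polynomial ℝ) • B.map Polynomial.C)
  rw [RingHom.mapMatrix_apply, hmapz] at h1
  simp only [Polynomial.coe_evalRingHom] at h1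
  rw [h1, hcon r, Polynomial.eval_zero]

/-- A real symplectic matrix has determinant 1. -/
theorem det_symplectic (S : Matrix (l ⊕ l) (l ⊕ l) ℝ)
    (h : Sᵀ * symplJ l * S = symplJ l) : S.det = 1 := by
  set A := S.toBlocks₁₁ with hA
  set B := S.toBlocks₁₂ with hB
  set C := S.toBlocks₂₁ with hC
  set D := S.toBlocks₂₂ with hD
  have hS : S = fromBlocks A B C D := (fromBlocks_toBlocks S).symm
  rw [hS] at h ⊢
  obtain ⟨hABt, hADt⟩ := rel_right h
  -- M = A Aᵀ + B Bᵀ is invertible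
  have hMdet : (A * Aᵀ + B * Bᵀ).det ≠ 0 := by
    intro h0
    obtain ⟨v, hv, hv0⟩ := Matrix.exists_mulVec_eq_zero_iff.mpr h0
    apply hv
    have hself : (Aᵀ *ᵥ v) ⬝ᵥ (Aᵀ *ᵥ v) + (Bᵀ *ᵥ v) ⬝ᵥ (Bᵀ *ᵥ v) = 0 := by
      have : v ⬝ᵥ ((A * Aᵀ + B * Bᵀ) *ᵥ v) = 0 := by rw [hv0, dotProduct_zero]
      rw [Matrix.add_mulVec, dotProduct_add, ← Matrix.mulVec_mulVec,
        ← Matrix.mulVec_mulVec, Matrix.dotProduct_mulVec v A,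
        Matrix.dotProduct_mulVec v B, ← Matrix.mulVec_transpose A,
        ← Matrix.mulVec_transpose B] at this
      exact this
    have h1 : (Aᵀ *ᵥ v) ⬝ᵥ (Aᵀ *ᵥ v) = 0 ∧ (Bᵀ *ᵥ v) ⬝ᵥ (Bᵀ *ᵥ v) = 0 := by
      constructor <;> nlinarith [dp_nonneg (Aᵀ *ᵥ v), dp_nonneg (Bᵀ *ᵥ v)]
    have hAv : Aᵀ *ᵥ v = 0 := dotProduct_self_eq_zero.mp h1.1
    have hBv : Bᵀ *ᵥ v = 0 := dotProduct_self_eq_zero.mp h1.2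
    have hDAt : D * Aᵀ - C * Bᵀ = 1 := by
      have := congrArg Matrix.transpose hADt
      simpa [Matrix.transpose_sub, Matrix.transpose_mul] using this
    calc v = (D * Aᵀ - C * Bᵀ) *ᵥ v := by rw [hDAt, Matrix.one_mulVec]
      _ = D *ᵥ (Aᵀ *ᵥ v) - C *ᵥ (Bᵀ *ᵥ v) := by
          rw [Matrix.sub_mulVec, Matrix.mulVec_mulVec, Matrix.mulVec_mulVec]
      _ = 0 := by rw [hAv, hBv, Matrix.mulVec_zero, Matrix.mulVec_zero, sub_zero]
  have hdetc := complex_det_ne A B hABt hMdet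
  obtain ⟨z, hz⟩ := exists_real_det_ne A B hdetc
  -- multiply by V on the right
  set V : Matrix (l ⊕ l) (l ⊕ l) ℝ := fromBlocks 1 0 (z • (1 : Matrix l l ℝ)) 1 with hV
  have hVsymp : Vᵀ * symplJ l * V = symplJ l := by
    rw [hV, symplJ, fromBlocks_transpose, fromBlocks_multiply, fromBlocks_multiply]
    simp
  have hdetV : V.det = 1 := by
    rw [hV, det_fromBlocks_zero₁₂, det_one, mul_one]
  have hSV : fromBlocks A B C D * V
      = fromBlocks (A + z • B) B (C + z • D) D := by
    rw [hV, fromBlocks_multiply]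
    simp [Matrix.mul_smul]
  have hSVsymp : (fromBlocks (A + z • B) B (C + z • D) D)ᵀ * symplJ l *
      (fromBlocks (A + z • B) B (C + z • D) D) = symplJ l := by
    rw [← hSV, Matrix.transpose_mul]
    calc Vᵀ * (fromBlocks A B C D)ᵀ * symplJ l * (fromBlocks A B C D * V)
        = Vᵀ * ((fromBlocks A B C D)ᵀ * symplJ l * fromBlocks A B C D) * V := by
          simp only [mul_assoc]
      _ = Vᵀ * symplJ l * V := by rw [h, mul_assoc]
      _ = symplJ l := hVsymp
  obtain ⟨hr1, hr2⟩ := rel_left hSVsymp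
  have hUnit : IsUnit (A + z • B).det := isUnit_iff_ne_zero.mpr hz
  have : Invertible (A + z • B) := Matrix.invertibleOfIsUnitDet _ hUnit
  have hdetSV : (fromBlocks (A + z • B) B (C + z • D) D).det = 1 := by
    rw [Matrix.det_fromBlocks₁₁]
    rw [← Matrix.det_transpose (A + z • B), ← Matrix.det_mul]
    have : (A + z • B)ᵀ * (D - (C + z • D) * ⅟(A + z • B) * B) = 1 := by
      rw [Matrix.mul_sub]
      have hassoc : (A + z • B)ᵀ * ((C + z • D) * ⅟(A + z • B) * B)
          = (A + z • B)ᵀ * (C + z • D) * ⅟(A + z • B) * B := by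
        simp only [mul_assoc]
      rw [hassoc, hr1]
      have : (C + z • D)ᵀ * (A + z • B) * ⅟(A + z • B) * B = (C + z • D)ᵀ * B := by
        rw [mul_assoc ((C + z • D)ᵀ) (A + z • B) (⅟(A + z • B)), mul_invOf_self, mul_one]
      rw [this]
      exact hr2
    rw [this, det_one]
  have hdet := congrArg Matrix.det hSV
  rw [Matrix.det_mul, hdetV, mul_one, hdetSV] at hdet
  exact hdet

/-- An "anti-symplectic" matrix has determinant `(-1)^card l`. -/
theorem det_antisymplectic (X : Matrix (l ⊕ l) (l ⊕ l) ℝ)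
    (h : Xᵀ * symplJ l * X = -(symplJ l)) :
    X.det = (-1) ^ Fintype.card l := by
  set X₀ : Matrix (l ⊕ l) (l ⊕ l) ℝ := fromBlocks 1 0 0 (-1) with hX₀
  have hX₀t : X₀ᵀ = X₀ := by
    rw [hX₀, fromBlocks_transpose, Matrix.transpose_one, Matrix.transpose_zero,
      Matrix.transpose_neg, Matrix.transpose_one]
  have hX₀J : X₀ * symplJ l * X₀ = -(symplJ l) := by
    rw [hX₀, symplJ, fromBlocks_multiply, fromBlocks_multiply, Matrix.fromBlocks_neg]
    simp
  have hSymp : (X₀ * X)ᵀ * symplJ l * (X₀ * X) = symplJ l := by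
    rw [Matrix.transpose_mul, hX₀t]
    calc Xᵀ * X₀ * symplJ l * (X₀ * X)
        = Xᵀ * (X₀ * symplJ l * X₀) * X := by simp only [mul_assoc]
      _ = Xᵀ * -(symplJ l) * X := by rw [hX₀J]
      _ = -(Xᵀ * symplJ l * X) := by rw [Matrix.mul_neg, Matrix.neg_mul]
      _ = symplJ l := by rw [h, neg_neg]
  have hdet1 : (X₀ * X).det = 1 := det_symplectic _ hSymp
  have hdetX₀ : X₀.det = (-1 : ℝ) ^ Fintype.card l := by
    rw [hX₀, det_fromBlocks_zero₂₁, det_one, one_mul]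
    rw [show (-1 : Matrix l l ℝ) = -(1 : Matrix l l ℝ) by rfl, Matrix.det_neg, det_one,
      mul_one]
  rw [Matrix.det_mul, hdetX₀] at hdet1
  have hsq : ((-1 : ℝ) ^ Fintype.card l) * ((-1 : ℝ) ^ Fintype.card l) = 1 := by
    rw [← mul_pow]; norm_num
  calc X.det = (((-1 : ℝ) ^ Fintype.card l) * ((-1 : ℝ) ^ Fintype.card l)) * X.det := by
        rw [hsq, one_mul]
    _ = ((-1 : ℝ) ^ Fintype.card l) * (((-1 : ℝ) ^ Fintype.card l) * X.det) := by ring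
    _ = (-1 : ℝ) ^ Fintype.card l := by rw [hdet1, mul_one]



lemma rel_four {l : Type*} [Fintype l] [DecidableEq l] {E EE F FF K : Matrix l l ℝ}
    (h : (fromBlocks E EE F FF)ᵀ * symplJ l * fromBlocks E EE F FF = fromBlocks K 0 0 K) :
    Eᵀ * F - Fᵀ * E = K ∧ Eᵀ * FF = Fᵀ * EE ∧ EEᵀ * F = FFᵀ * E ∧
      EEᵀ * FF - FFᵀ * EE = K := by
  rw [fromBlocks_transpose, symplJ, fromBlocks_multiply, fromBlocks_multiply] at h
  simp only [Matrix.mul_zero, Matrix.mul_one, Matrix.mul_neg, Matrix.neg_mul,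
    zero_add, add_zero] at h
  obtain ⟨h11, h12, h21, h22⟩ := blocks_eq h
  refine ⟨?_, ?_, ?_, ?_⟩
  · rwa [neg_add_eq_sub] at h11
  · rw [neg_add_eq_sub, sub_eq_zero] at h12; exact h12
  · rw [neg_add_eq_sub, sub_eq_zero] at h21; exact h21
  · rwa [neg_add_eq_sub] at h22

lemma anti_of_rels {l : Type*} [Fintype l] [DecidableEq l] {E EE F FF K : Matrix l l ℝ}
    (hdetE : IsUnit E.det)
    (h1 : Eᵀ * F - Fᵀ * E = K) (h2 : Eᵀ * FF = Fᵀ * EE) (h2' : EEᵀ * F = FFᵀ * E)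
    (h3 : EEᵀ * FF - FFᵀ * EE = K) :
    (E⁻¹ * EE)ᵀ * K * (E⁻¹ * EE) = -K := by
  have hEi : E * E⁻¹ = 1 := Matrix.mul_nonsing_inv _ hdetE
  have hEit : (E⁻¹)ᵀ * Eᵀ = 1 := by rw [← Matrix.transpose_mul, hEi, Matrix.transpose_one]
  have hmid : (E⁻¹)ᵀ * K * E⁻¹ = F * E⁻¹ - (E⁻¹)ᵀ * Fᵀ := by
    rw [← h1, Matrix.mul_sub, Matrix.sub_mul]
    congr 1
    · rw [← mul_assoc, hEit, one_mul]
    · rw [← mul_assoc, mul_assoc ((E⁻¹)ᵀ * Fᵀ) E E⁻¹, hEi, mul_one]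
  have hstep : (E⁻¹ * EE)ᵀ * K * (E⁻¹ * EE) = EEᵀ * ((E⁻¹)ᵀ * K * E⁻¹) * EE := by
    simp only [Matrix.transpose_mul, mul_assoc]
  rw [hstep, hmid, Matrix.mul_sub, Matrix.sub_mul]
  have e1 : EEᵀ * (F * E⁻¹) * EE = FFᵀ * EE := by
    rw [← mul_assoc, h2', mul_assoc FFᵀ E E⁻¹, hEi, mul_one]
  have e2 : EEᵀ * ((E⁻¹)ᵀ * Fᵀ) * EE = EEᵀ * FF := by
    rw [← mul_assoc, mul_assoc (EEᵀ * (E⁻¹)ᵀ) Fᵀ EE, ← h2, ← mul_assoc,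
      mul_assoc EEᵀ ((E⁻¹)ᵀ) Eᵀ, hEit, mul_one]
  rw [e1, e2, ← neg_sub, h3]

end SymplAux


/-- If `𝒜 ∈ Sp(2d,ℝ)` and `E_𝒜` is invertible, then `ℰ_𝒜` is invertible and
`det ℰ_𝒜 = (-1)^d det E_𝒜`. -/
theorem subEE_invertible (d : ℕ) (𝒜 : Matrix (I4 d) (I4 d) ℝ) (h𝒜 : IsSymplectic 𝒜)
    (hE : IsUnit (subE 𝒜)) :
    IsUnit (subEE 𝒜) ∧ (subEE 𝒜).det = (-1) ^ d * (subE 𝒜).det := by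
  classical
  let σ : I4 d ≃ I4 d :=
    ⟨Sum.elim (colOdd d) (colEven d), Sum.elim (colOdd d) (colEven d),
      fun x => by rcases x with (i | i) | (i | i) <;> rfl,
      fun x => by rcases x with (i | i) | (i | i) <;> rfl⟩
  have h𝒜' : 𝒜ᵀ * symplJ (I2 d) * 𝒜 = symplJ (I2 d) := h𝒜
  have hσB : 𝒜.submatrix id ⇑σ = fromBlocks (subE 𝒜) (subEE 𝒜) (subF 𝒜) (subFF 𝒜) := by
    ext i j
    rcases i with i | i <;> rcases j with j | j <;> rfl
  have hmain : (𝒜.submatrix id ⇑σ)ᵀ * symplJ (I2 d) * 𝒜.submatrix id ⇑σ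
      = (symplJ (I2 d)).submatrix ⇑σ ⇑σ := by
    rw [transpose_submatrix]
    have e1 : 𝒜ᵀ.submatrix ⇑σ id * symplJ (I2 d)
        = (𝒜ᵀ * symplJ (I2 d)).submatrix ⇑σ id := by
      have h := Matrix.submatrix_mul_equiv 𝒜ᵀ (symplJ (I2 d)) ⇑σ (Equiv.refl (I4 d)) id
      simpa using h
    have e2 : (𝒜ᵀ * symplJ (I2 d)).submatrix ⇑σ id * 𝒜.submatrix id ⇑σ
        = (𝒜ᵀ * symplJ (I2 d) * 𝒜).submatrix ⇑σ ⇑σ := by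
      have h := Matrix.submatrix_mul_equiv (𝒜ᵀ * symplJ (I2 d)) 𝒜 ⇑σ (Equiv.refl (I4 d)) ⇑σ
      simpa using h
    rw [e1, e2, h𝒜']
  have hK : (symplJ (I2 d)).submatrix ⇑σ ⇑σ
      = fromBlocks (symplJ (Fin d)) 0 0 (symplJ (Fin d)) := by
    ext i j
    rcases i with (i | i) | (i | i) <;> rcases j with (j | j) | (j | j) <;>
      simp [σ, symplJ, colOdd, colEven, Matrix.one_apply, Matrix.submatrix_apply,
        Sum.inl.injEq, Sum.inr.injEq]
  have hBlocksEq : (fromBlocks (subE 𝒜) (subEE 𝒜) (subF 𝒜) (subFF 𝒜))ᵀ * symplJ (I2 d) *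
      fromBlocks (subE 𝒜) (subEE 𝒜) (subF 𝒜) (subFF 𝒜)
      = fromBlocks (symplJ (Fin d)) 0 0 (symplJ (Fin d)) := by
    rw [← hσB, hmain, hK]
  obtain ⟨h1, h2, h2', h3⟩ := SymplAux.rel_four hBlocksEq
  have hdetE : IsUnit (subE 𝒜).det := (Matrix.isUnit_iff_isUnit_det _).mp hE
  have hanti := SymplAux.anti_of_rels hdetE h1 h2 h2' h3
  have hdetX := SymplAux.det_antisymplectic _ hanti
  rw [Fintype.card_fin] at hdetX
  have hEEeq : subEE 𝒜 = subE 𝒜 * ((subE 𝒜)⁻¹ * subEE 𝒜) := by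
    rw [← mul_assoc, Matrix.mul_nonsing_inv _ hdetE, one_mul]
  have hdet : (subEE 𝒜).det = (-1) ^ d * (subE 𝒜).det := by
    rw [hEEeq, Matrix.det_mul, hdetX]; ring
  refine ⟨?_, hdet⟩
  rw [Matrix.isUnit_iff_isUnit_det, hdet]
  exact (isUnit_one.neg.pow d).mul hdetE
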